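/- arXiv:2304.09815 — 2 statements merged into one kernel-verified Lean document; each statement's English description precedes it below -/
import Mathlib

section
/- Fix 0 < a < 1. Then: (i) for every x > 1/2, 0 ≤ ψ₀(a,x) − log(2x)/(1+a) ≤ log( (2x)^{a/(1+a)} / ((2x)^{a/(1+a)} − (2x)^{−a/(1+a)}) ); (ii) for every x > 0, ψ₀(a,x) > log(2x)/(1+a); (iii) consequently, lim_{x→∞} ( ψ₀(a,x) − log(2x)/(1+a) ) = 0. -/
/-- `f(a,w) = sinh(a·w)·e^w`. -/
noncomputable def fab (a w : ℝ) : ℝ := Real.sinh (a * w) * Real.exp w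

/-- `M_a = (1/(2a))·log((1−a)/(1+a))`. -/
noncomputable def Ma (a : ℝ) : ℝ := (1 / (2 * a)) * Real.log ((1 - a) / (1 + a))

/-- `L_a = −(a/√(1−a²))·((1−a)/(1+a))^{1/(2a)}`. -/
noncomputable def La (a : ℝ) : ℝ :=
  -(a / Real.sqrt (1 - a ^ 2)) * ((1 - a) / (1 + a)) ^ (1 / (2 * a))

open Real Filter

lemma fab_eq (a w : ℝ) : fab a w = (Real.exp ((1+a)*w) - Real.exp ((1-a)*w)) / 2 := by
  rw [fab, Real.sinh_eq, div_mul_eq_mul_div, sub_mul, ← Real.exp_add, ← Real.exp_add]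
  ring_nf

lemma fab_hasDeriv (a w : ℝ) :
    HasDerivAt (fab a) ((a * Real.cosh (a*w) + Real.sinh (a*w)) * Real.exp w) w := by
  have h1 : HasDerivAt (fun w => Real.sinh (a*w)) (a * Real.cosh (a*w)) w := by
    simpa [mul_comm, Function.comp_def] using (Real.hasDerivAt_sinh (a*w)).comp w ((hasDerivAt_id w).const_mul a)
  have := h1.mul (Real.hasDerivAt_exp w)
  refine this.congr_deriv ?_
  ring

lemma Ma_neg (a : ℝ) (ha0 : 0 < a) (ha1 : a < 1) : Ma a < 0 := by
  have hlog : Real.log ((1 - a) / (1 + a)) < 0 :=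
    Real.log_neg (div_pos (by linarith) (by linarith))
      (by rw [div_lt_one (by linarith)]; linarith)
  exact mul_neg_of_pos_of_neg (div_pos one_pos (by linarith)) hlog

lemma fab_strictMono (a : ℝ) (ha0 : 0 < a) (ha1 : a < 1) :
    StrictMonoOn (fab a) (Set.Ici (Ma a)) := by
  apply strictMonoOn_of_deriv_pos (convex_Ici _)
  · exact ((Real.continuous_sinh.comp (continuous_const.mul continuous_id)).mul
      Real.continuous_exp).continuousOn
  · intro w hw
    rw [interior_Ici] at hw
    rw [(fab_hasDeriv a w).deriv]
    have hratio : (1 - a) / (1 + a) < Real.exp (2 * a * w) := by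
      have h1 : Real.log ((1 - a) / (1 + a)) < 2 * a * w := by
        have := (mul_lt_mul_iff_right₀ (show (0:ℝ) < 2 * a by positivity)).mpr hw
        rw [Ma] at this
        calc Real.log ((1 - a) / (1 + a))
            = 2 * a * (1 / (2 * a) * Real.log ((1 - a) / (1 + a))) := by
              field_simp
          _ < 2 * a * w := this
      calc (1 - a) / (1 + a) = Real.exp (Real.log ((1 - a) / (1 + a))) := by
            rw [Real.exp_log (div_pos (by linarith) (by linarith))]
        _ < Real.exp (2 * a * w) := Real.exp_lt_exp.mpr h1
    have h2 : 1 - a < Real.exp (2 * a * w) * (1 + a) := by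
      rw [div_lt_iff₀ (by linarith)] at hratio
      linarith
    have hE : Real.exp (2 * a * w) = Real.exp (a * w) * Real.exp (a * w) := by
      rw [← Real.exp_add]; ring_nf
    have hEE : Real.exp (a * w) * Real.exp (-(a * w)) = 1 := by
      rw [← Real.exp_add]; simp
    have hpos : 0 < a * Real.cosh (a * w) + Real.sinh (a * w) := by
      rw [Real.cosh_eq, Real.sinh_eq]
      nlinarith [Real.exp_pos (a * w), Real.exp_pos (-(a * w))]
    positivity


/-- Bounds on `ψ₀(a,x) − log(2x)/(1+a)` and the limit
`ψ₀(a,x) − log(2x)/(1+a) → 0` as `x → ∞`. -/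
theorem stmt_13 (a : ℝ) (ha0 : 0 < a) (ha1 : a < 1) (psi0 : ℝ → ℝ)
    (hpsi0 : ∀ x, La a ≤ x → Ma a ≤ psi0 x ∧ fab a (psi0 x) = x) :
    (∀ x : ℝ, 1 / 2 < x →
      0 ≤ psi0 x - Real.log (2 * x) / (1 + a) ∧
      psi0 x - Real.log (2 * x) / (1 + a) ≤
        Real.log ((2 * x) ^ (a / (1 + a)) /
          ((2 * x) ^ (a / (1 + a)) - (2 * x) ^ (-(a / (1 + a)))))) ∧
    (∀ x : ℝ, 0 < x → Real.log (2 * x) / (1 + a) < psi0 x) ∧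
    Filter.Tendsto (fun x => psi0 x - Real.log (2 * x) / (1 + a))
      Filter.atTop (nhds 0) := by
  have hb : (0:ℝ) < 1 + a := by linarith
  have hMa := Ma_neg a ha0 ha1
  have hLa : La a < 0 := by
    rw [La]
    have h1 : 0 < a / Real.sqrt (1 - a ^ 2) := by
      apply div_pos ha0 (Real.sqrt_pos.mpr (by nlinarith))
    have h2 : (0:ℝ) < ((1 - a) / (1 + a)) ^ (1 / (2 * a)) :=
      Real.rpow_pos_of_pos (div_pos (by linarith) (by linarith)) _
    nlinarith
  have hmono := fab_strictMono a ha0 ha1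
  -- part (ii)
  have key2 : ∀ x : ℝ, 0 < x → Real.log (2 * x) / (1 + a) < psi0 x := by
    intro x hx
    obtain ⟨hψM, hψf⟩ := hpsi0 x (le_of_lt (lt_trans hLa hx))
    set g := Real.log (2 * x) / (1 + a) with hg
    have h1 : (1 + a) * g = Real.log (2 * x) := by rw [hg]; field_simp
    have hfg : fab a g < x := by
      rw [fab_eq, h1, Real.exp_log (by linarith)]
      have := Real.exp_pos ((1 - a) * g)
      linarith
    by_contra h
    push_neg at h
    have hgM : Ma a ≤ g := le_trans hψM h
    have := hmono.monotoneOn hψM hgM h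
    rw [hψf] at this
    linarith
  have key1 : ∀ x : ℝ, 1 / 2 < x →
      0 ≤ psi0 x - Real.log (2 * x) / (1 + a) ∧
      psi0 x - Real.log (2 * x) / (1 + a) ≤
        Real.log ((2 * x) ^ (a / (1 + a)) /
          ((2 * x) ^ (a / (1 + a)) - (2 * x) ^ (-(a / (1 + a))))) := by
    intro x hx
    have hx0 : 0 < x := by linarith
    have ht1 : (1:ℝ) < 2 * x := by linarith
    have ht0 : (0:ℝ) < 2 * x := by linarith
    obtain ⟨hψM, hψf⟩ := hpsi0 x (le_of_lt (lt_trans hLa hx0))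
    set g := Real.log (2 * x) / (1 + a) with hgdef
    have hg0 : 0 < g := div_pos (Real.log_pos ht1) hb
    set T := (2 * x) ^ (a / (1 + a)) with hTdef
    have hT1 : 1 < T := Real.one_lt_rpow_iff_of_pos ht0 |>.mpr (Or.inl ⟨ht1, by positivity⟩)
    have hT0 : 0 < T := by linarith
    have hTneg : (2 * x) ^ (-(a / (1 + a))) = T⁻¹ := Real.rpow_neg ht0.le _
    have hden : 0 < T - T⁻¹ := by
      have : T⁻¹ < 1 := by rw [inv_lt_one_iff₀]; right; exact hT1
      linarith
    clear_value T
    set s := T / (T - T⁻¹) with hsdef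
    have hs1 : 1 < s := by
      rw [hsdef, lt_div_iff₀ hden]
      have : 0 < T⁻¹ := by positivity
      linarith
    have hs0 : 0 < s := by linarith
    clear_value s
    refine ⟨by have := key2 x hx0; linarith, ?_⟩
    rw [hTneg, ← hsdef]
    -- show psi0 x ≤ g + log s
    set u := g + Real.log s with hudef
    have hlogs : 0 < Real.log s := Real.log_pos hs1
    have hu0 : 0 < u := by positivity
    have huM : Ma a ≤ u := by linarith
    have hg1 : (1 + a) * g = Real.log (2 * x) := by rw [hgdef]; field_simp
    -- fab a u ≥ x
    have hfu : x ≤ fab a u := by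
      rw [fab_eq]
      have e1 : Real.exp ((1 + a) * u) = (2 * x) * s ^ (1 + a) := by
        rw [hudef, mul_add, Real.exp_add, hg1, Real.exp_log ht0,
          Real.rpow_def_of_pos hs0]
        ring_nf
      have e2 : Real.exp ((1 - a) * u) = (2 * x) ^ ((1 - a)/(1 + a)) * s ^ (1 - a) := by
        rw [hudef, mul_add, Real.exp_add, Real.rpow_def_of_pos hs0,
          Real.rpow_def_of_pos ht0,
          show (1 - a) * g = Real.log (2 * x) * ((1 - a) / (1 + a)) by rw [hgdef]; ring,
          mul_comm ((1:ℝ) - a) (Real.log s)]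
      rw [e1, e2]
      have hTT : T * T = (2 * x) ^ (2 * a / (1 + a)) := by
        rw [hTdef, ← Real.rpow_add ht0]; ring_nf
      have hkey : (2 * x) ^ ((1 - a)/(1 + a)) * (T * T) = 2 * x := by
        rw [hTT, ← Real.rpow_add ht0]
        rw [show (1 - a)/(1 + a) + 2 * a / (1 + a) = 1 by field_simp; ring]
        exact Real.rpow_one _
      have hc : (2 * x) ^ ((1 - a)/(1 + a)) = (2 * x) / (T * T) := by
        rw [eq_div_iff (by positivity)]; exact hkey
      have hsl : s ≤ s ^ (1 + a) := by
        calc s = s ^ (1:ℝ) := (Real.rpow_one s).symm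
          _ ≤ s ^ (1 + a) := Real.rpow_le_rpow_of_exponent_le hs1.le (by linarith)
      have hsh : s ^ (1 - a) ≤ s := by
        calc s ^ (1 - a) ≤ s ^ (1:ℝ) :=
            Real.rpow_le_rpow_of_exponent_le hs1.le (by linarith)
          _ = s := Real.rpow_one s
      have hT' : T ≠ 0 := ne_of_gt hT0
      have hd' : T - T⁻¹ ≠ 0 := ne_of_gt hden
      have hTTpos : (0:ℝ) < T * T := mul_pos hT0 hT0
      have hsTT : s * (T * T - 1) = T * T := by
        rw [hsdef, div_mul_eq_mul_div, div_eq_iff hd']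
        field_simp
      rw [hc]
      have h1 : (2 * x) * s ≤ (2 * x) * s ^ (1 + a) :=
        mul_le_mul_of_nonneg_left hsl ht0.le
      have h2 : (2 * x) / (T * T) * s ^ (1 - a) ≤ (2 * x) / (T * T) * s :=
        mul_le_mul_of_nonneg_left hsh (by positivity)
      have h3 : (2 * x) / (T * T) * s = (2 * x) * s - 2 * x := by
        rw [div_mul_eq_mul_div, div_eq_iff (ne_of_gt hTTpos)]
        linear_combination (-(2 * x)) * hsTT
      linarith
    by_contra h
    push_neg at h
    have hlt : u < psi0 x := by linarith
    have := hmono huM hψM hlt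
    rw [hψf] at this
    linarith
  refine ⟨key1, key2, ?_⟩
  · -- part (iii)
    have hpos : 0 < a / (1 + a) := by positivity
    have h2x : Tendsto (fun x : ℝ => 2 * x) atTop atTop :=
      Tendsto.const_mul_atTop two_pos tendsto_id
    have hF : Tendsto (fun x : ℝ => (2 * x) ^ (a / (1 + a))) atTop atTop :=
      (tendsto_rpow_atTop hpos).comp h2x
    have hFinv : Tendsto (fun x : ℝ => ((2 * x) ^ (a / (1 + a)))⁻¹ *
        ((2 * x) ^ (a / (1 + a)))⁻¹) atTop (nhds 0) := by
      have h := hF.inv_tendsto_atTop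
      simpa using h.mul h
    have h1 : Tendsto (fun x : ℝ => (1 - ((2 * x) ^ (a / (1 + a)))⁻¹ *
        ((2 * x) ^ (a / (1 + a)))⁻¹)⁻¹) atTop (nhds 1) := by
      have := (tendsto_const_nhds.sub hFinv).inv₀ (by norm_num : (1:ℝ) - 0 ≠ 0)
      simpa using this
    have heq : ∀ᶠ x : ℝ in atTop,
        (1 - ((2 * x) ^ (a / (1 + a)))⁻¹ * ((2 * x) ^ (a / (1 + a)))⁻¹)⁻¹ =
        (2 * x) ^ (a / (1 + a)) /
          ((2 * x) ^ (a / (1 + a)) - (2 * x) ^ (-(a / (1 + a)))) := by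
      filter_upwards [eventually_gt_atTop (1/2 : ℝ)] with x hx
      have ht0 : (0:ℝ) < 2 * x := by linarith
      have ht1 : (1:ℝ) < 2 * x := by linarith
      have hT1 : 1 < (2 * x) ^ (a / (1 + a)) :=
        Real.one_lt_rpow_iff_of_pos ht0 |>.mpr (Or.inl ⟨ht1, hpos⟩)
      have hT0 : (0:ℝ) < (2 * x) ^ (a / (1 + a)) := by linarith
      rw [Real.rpow_neg ht0.le]
      set T := (2 * x) ^ (a / (1 + a))
      have hden : 0 < T - T⁻¹ := by
        have : T⁻¹ < 1 := by rw [inv_lt_one_iff₀]; right; exact hT1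
        linarith
      have hT' : T ≠ 0 := ne_of_gt hT0
      have hd' : T - T⁻¹ ≠ 0 := ne_of_gt hden
      field_simp
    have hratio : Tendsto (fun x : ℝ => (2 * x) ^ (a / (1 + a)) /
        ((2 * x) ^ (a / (1 + a)) - (2 * x) ^ (-(a / (1 + a))))) atTop (nhds 1) :=
      h1.congr' heq
    have hlog : Tendsto (fun x : ℝ => Real.log ((2 * x) ^ (a / (1 + a)) /
        ((2 * x) ^ (a / (1 + a)) - (2 * x) ^ (-(a / (1 + a)))))) atTop (nhds 0) := by
      have := (Real.continuousAt_log one_ne_zero).tendsto.comp hratio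
      simpa [Function.comp_def] using this
    apply tendsto_of_tendsto_of_tendsto_of_le_of_le' tendsto_const_nhds hlog
    · filter_upwards [eventually_gt_atTop (1/2 : ℝ)] with x hx
      exact (key1 x hx).1
    · filter_upwards [eventually_gt_atTop (1/2 : ℝ)] with x hx
      exact (key1 x hx).2
end

section
/- Fix 0 < a < 1. For every x satisfying L_a ≤ x < 0 and −(1/2)·((1−a)/(6a+2))^{(1−a)/(2a)} ≤ x, the branch ψ₋₁ satisfies the two-sided bound log(−2x)/(1−a) + (1/(1−a))·(−2x)^{2a/(1−a)} ≤ ψ₋₁(a,x) ≤ log(−2x)/(1−a) + (2/(1−a))·(−2x)^{2a/(1−a)}. -/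
private lemma exp_neg_le_quad {z : ℝ} (hz : 0 ≤ z) :
    Real.exp (-z) ≤ 1 - z + z ^ 2 / 2 := by
  have h3 : 1 + z + z ^ 2 / 2 ≤ Real.exp z := by
    have := Real.sum_le_exp_of_nonneg hz 3
    simp [Finset.sum_range_succ] at this
    nlinarith [this]
  have h5 : (0:ℝ) < 1 + z + z ^ 2 / 2 := by positivity
  have h6 : Real.exp (-z) ≤ 1 / (1 + z + z ^ 2 / 2) := by
    rw [Real.exp_neg, one_div]
    exact inv_anti₀ h5 h3
  calc Real.exp (-z) ≤ 1 / (1 + z + z ^ 2 / 2) := h6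
    _ ≤ 1 - z + z ^ 2 / 2 := by
        rw [div_le_iff₀ h5]; nlinarith [sq_nonneg (z ^ 2), sq_nonneg z]

private lemma exp_le_inv_one_sub {z : ℝ} (hz0 : 0 ≤ z) (hz1 : z < 1) :
    Real.exp z ≤ 1 / (1 - z) := by
  have h : 1 - z ≤ Real.exp (-z) := by linarith [Real.add_one_le_exp (-z)]
  have hmul : Real.exp z * Real.exp (-z) = 1 := by rw [← Real.exp_add]; simp
  rw [le_div_iff₀ (by linarith : (0:ℝ) < 1 - z)]
  nlinarith [Real.exp_pos z, mul_le_mul_of_nonneg_left h (Real.exp_pos z).le]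

private lemma fab_anti {a : ℝ} (ha0 : 0 < a) (ha1 : a < 1) :
    StrictAntiOn (fab a) (Set.Iic (Ma a)) := by
  have hcont : Continuous (fab a) := by
    unfold fab; fun_prop
  apply strictAntiOn_of_deriv_neg (convex_Iic _) hcont.continuousOn
  intro w hw
  rw [interior_Iic] at hw
  have hw' : w < (1 / (2 * a)) * Real.log ((1 - a) / (1 + a)) := hw
  have hD : HasDerivAt (fab a)
      ((a * Real.cosh (a * w) + Real.sinh (a * w)) * Real.exp w) w := by
    have h1 : HasDerivAt (fun y : ℝ => Real.sinh (a * y)) (Real.cosh (a * w) * a) w :=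
      (Real.hasDerivAt_sinh (a * w)).comp w (by simpa using (hasDerivAt_id w).const_mul a)
    have h2 := h1.mul (Real.hasDerivAt_exp w)
    have e : (a * Real.cosh (a * w) + Real.sinh (a * w)) * Real.exp w
        = Real.cosh (a * w) * a * Real.exp w + Real.sinh (a * w) * Real.exp w := by ring
    rw [e]
    exact h2
  rw [hD.deriv]
  have hR : (0:ℝ) < (1 - a) / (1 + a) := div_pos (by linarith) (by linarith)
  have h2a : (0:ℝ) < 2 * a := by linarith
  have hlt : Real.exp (2 * a * w) < (1 - a) / (1 + a) := by
    have h1 : 2 * a * w < Real.log ((1 - a) / (1 + a)) := by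
      calc 2 * a * w < 2 * a * ((1 / (2 * a)) * Real.log ((1 - a) / (1 + a))) :=
            (mul_lt_mul_iff_right₀ h2a).2 hw'
        _ = Real.log ((1 - a) / (1 + a)) := by field_simp
    calc Real.exp (2 * a * w) < Real.exp (Real.log ((1 - a) / (1 + a))) :=
          Real.exp_lt_exp.2 h1
      _ = (1 - a) / (1 + a) := Real.exp_log hR
  have h3 : (1 + a) * Real.exp (2 * a * w) < 1 - a := by
    have := (lt_div_iff₀ (by linarith : (0:ℝ) < 1 + a)).1 hlt
    linarith
  apply mul_neg_of_neg_of_pos _ (Real.exp_pos w)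
  rw [Real.cosh_eq, Real.sinh_eq]
  have hpq : Real.exp (a * w) * Real.exp (a * w) = Real.exp (2 * a * w) := by
    rw [← Real.exp_add]; ring_nf
  have hpq2 : Real.exp (a * w) * Real.exp (-(a * w)) = 1 := by
    rw [← Real.exp_add]; simp
  nlinarith [Real.exp_pos (a * w), Real.exp_pos (-(a * w)), hpq, hpq2, h3]

set_option maxHeartbeats 1000000 in
/-- Two-sided bounds for `ψ₋₁(a,x)` when
`max(L_a, −(1/2)((1−a)/(6a+2))^{(1−a)/(2a)}) ≤ x < 0`. -/
theorem stmt_18 (a x : ℝ) (ha0 : 0 < a) (ha1 : a < 1) (psi1 : ℝ → ℝ)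
    (hpsi1 : ∀ t, La a ≤ t → t < 0 → psi1 t ≤ Ma a ∧ fab a (psi1 t) = t)
    (hxL : La a ≤ x) (hx0 : x < 0)
    (hx : -(1/2) * ((1 - a) / (6 * a + 2)) ^ ((1 - a) / (2 * a)) ≤ x) :
    Real.log (-2 * x) / (1 - a) + (1 / (1 - a)) * (-2 * x) ^ (2 * a / (1 - a))
        ≤ psi1 x ∧
    psi1 x ≤ Real.log (-2 * x) / (1 - a)
        + (2 / (1 - a)) * (-2 * x) ^ (2 * a / (1 - a)) := by
  obtain ⟨hpM, hpf⟩ := hpsi1 x hxL hx0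
  have ha1' : (0:ℝ) < 1 - a := by linarith
  have hane : (1:ℝ) - a ≠ 0 := ne_of_gt ha1'
  have hu0 : (0:ℝ) < -2 * x := by linarith
  set u : ℝ := -2 * x with hu_def
  have hu : (0:ℝ) < u := hu0
  have ht0 : 0 < u ^ (2 * a / (1 - a)) := Real.rpow_pos_of_pos hu _
  -- t ≤ (1-a)/(6a+2)
  have hD0 : (0:ℝ) ≤ (1 - a) / (6 * a + 2) := by positivity
  have hub : u ≤ ((1 - a) / (6 * a + 2)) ^ ((1 - a) / (2 * a)) := by
    rw [hu_def]; linarith [hx]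
  have hT : u ^ (2 * a / (1 - a)) ≤ (1 - a) / (6 * a + 2) := by
    have h2 := Real.rpow_le_rpow hu.le hub
      (div_nonneg (by linarith) (by linarith) : (0:ℝ) ≤ 2 * a / (1 - a))
    calc u ^ (2 * a / (1 - a))
        ≤ (((1 - a) / (6 * a + 2)) ^ ((1 - a) / (2 * a))) ^ (2 * a / (1 - a)) := h2
      _ = ((1 - a) / (6 * a + 2)) ^ (((1 - a) / (2 * a)) * (2 * a / (1 - a))) := by
          rw [← Real.rpow_mul hD0]
      _ = (1 - a) / (6 * a + 2) := by
          rw [show ((1 - a) / (2 * a)) * (2 * a / (1 - a)) = 1 by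
            field_simp, Real.rpow_one]
  have hβ : u ^ (2 * a / (1 - a)) = Real.exp (Real.log u * (2 * a / (1 - a))) :=
    Real.rpow_def_of_pos hu _
  set t : ℝ := u ^ (2 * a / (1 - a)) with ht_def
  clear_value t
  clear_value u
  have hT' : t * (6 * a + 2) ≤ 1 - a := (le_div_iff₀ (by linarith)).mp hT
  have fab_eq : ∀ w : ℝ, fab a w
      = (Real.exp ((1 + a) * w) - Real.exp ((1 - a) * w)) / 2 := by
    intro w
    rw [fab, Real.sinh_eq, show (1 + a) * w = a * w + w by ring,
      show (1 - a) * w = -(a * w) + w by ring, Real.exp_add, Real.exp_add]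
    ring
  have hfab : ∀ c : ℝ, fab a ((Real.log u + c * t) / (1 - a)) =
      (u * t * (Real.exp (c * t) * Real.exp ((2 * a / (1 - a)) * (c * t)))
        - u * Real.exp (c * t)) / 2 := by
    intro c
    rw [fab_eq]
    rw [show (1 + a) * ((Real.log u + c * t) / (1 - a))
        = (Real.log u + Real.log u * (2 * a / (1 - a)))
          + (c * t + (2 * a / (1 - a)) * (c * t)) by field_simp; ring]
    rw [show (1 - a) * ((Real.log u + c * t) / (1 - a)) = Real.log u + c * t by
      field_simp]
    simp only [Real.exp_add, Real.exp_log hu]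
    rw [← hβ]
  have hx_eq : x = -u / 2 := by rw [hu_def]; ring
  -- lower candidate is a super-solution
  have hG1 : 1 ≤ Real.exp ((2 * a / (1 - a)) * (1 * t)) :=
    Real.one_le_exp (by positivity)
  have hE1t : Real.exp t * (1 - t) ≤ 1 := by
    have h : 1 - t ≤ Real.exp (-t) := by linarith [Real.add_one_le_exp (-t)]
    have hmul : Real.exp t * Real.exp (-t) = 1 := by rw [← Real.exp_add]; simp
    nlinarith [mul_le_mul_of_nonneg_left h (Real.exp_pos t).le]
  have hfw1 : x ≤ fab a ((Real.log u + 1 * t) / (1 - a)) := by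
    rw [hfab 1, hx_eq]
    have k1 : 0 ≤ t * Real.exp (1 * t)
        * (Real.exp ((2 * a / (1 - a)) * (1 * t)) - 1) :=
      mul_nonneg (mul_nonneg ht0.le (Real.exp_pos _).le) (by linarith)
    have k2 : 0 ≤ t * Real.exp (1 * t) - Real.exp (1 * t) + 1 := by
      rw [one_mul]; nlinarith [hE1t]
    linarith [mul_nonneg hu.le k1, mul_nonneg hu.le k2]
  -- upper candidate is a sub-solution
  have h4at : 4 * a * t < 1 - a := by nlinarith [mul_pos ha0 ht0, ht0]
  have hs0 : (0:ℝ) ≤ 4 * a * t / (1 - a) := by positivity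
  have hs1 : 4 * a * t / (1 - a) < 1 := by rw [div_lt_one ha1']; exact h4at
  have hB2 : Real.exp (4 * a * t / (1 - a)) ≤ 1 / (1 - 4 * a * t / (1 - a)) :=
    exp_le_inv_one_sub hs0 hs1
  have h1 : t * Real.exp (4 * a * t / (1 - a))
      ≤ t * (1 / (1 - 4 * a * t / (1 - a))) :=
    mul_le_mul_of_nonneg_left hB2 ht0.le
  have h2 : t * (1 / (1 - 4 * a * t / (1 - a))) ≤ 2 * t - 2 * t ^ 2 := by
    rw [mul_one_div, div_le_iff₀ (by linarith : (0:ℝ) < 1 - 4 * a * t / (1 - a))]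
    rw [show (1:ℝ) - 4 * a * t / (1 - a) = ((1 - a) - 4 * a * t) / (1 - a) by
      field_simp]
    rw [← mul_div_assoc, le_div_iff₀ ha1']
    nlinarith [mul_nonneg ht0.le (sub_nonneg.mpr hT'),
      mul_nonneg (mul_nonneg ha0.le ht0.le) (mul_nonneg ht0.le ht0.le)]
  have h5 : t * Real.exp (4 * a * t / (1 - a)) ≤ 2 * t - 2 * t ^ 2 := h1.trans h2
  have hquad : Real.exp (-(2 * t)) ≤ 1 - 2 * t + (2 * t) ^ 2 / 2 :=
    exp_neg_le_quad (by positivity)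
  have hts : t * Real.exp (4 * a * t / (1 - a)) ≤ 1 - Real.exp (-(2 * t)) := by
    linarith [h5, hquad]
  have hse : (2 * a / (1 - a)) * (2 * t) = 4 * a * t / (1 - a) := by ring
  have hfw2 : fab a ((Real.log u + 2 * t) / (1 - a)) ≤ x := by
    rw [hfab 2, hx_eq, hse]
    have hEE : Real.exp (2 * t) * Real.exp (-(2 * t)) = 1 := by
      rw [← Real.exp_add]; simp
    have k : Real.exp (2 * t) * Real.exp (-(2 * t))
        ≤ Real.exp (2 * t) * (1 - t * Real.exp (4 * a * t / (1 - a))) :=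
      mul_le_mul_of_nonneg_left (by linarith [hts]) (Real.exp_pos _).le
    rw [hEE] at k
    linarith [mul_nonneg hu.le (sub_nonneg.mpr k)]
  -- upper candidate is below Ma
  have hts2 : t * Real.exp (4 * a * t / (1 - a)) ≤ (1 - a) / (1 + a) := by
    rw [le_div_iff₀ (by linarith : (0:ℝ) < 1 + a)]
    nlinarith [mul_le_mul_of_nonneg_right h5 (by linarith : (0:ℝ) ≤ 1 + a),
      mul_pos ha0 ht0, mul_nonneg (mul_nonneg ha0.le ht0.le) ht0.le,
      mul_nonneg ht0.le ht0.le]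
  have hw2M : (Real.log u + 2 * t) / (1 - a) ≤ Ma a := by
    have hlog : Real.log (t * Real.exp (4 * a * t / (1 - a)))
        ≤ Real.log ((1 - a) / (1 + a)) :=
      Real.log_le_log (by positivity) hts2
    rw [Real.log_mul (ne_of_gt ht0) (Real.exp_pos _).ne', Real.log_exp] at hlog
    have hlogt : Real.log t = Real.log u * (2 * a / (1 - a)) := by
      rw [hβ, Real.log_exp]
    rw [hlogt] at hlog
    have key2 : 2 * a * Real.log u + 4 * a * t
        ≤ (1 - a) * Real.log ((1 - a) / (1 + a)) := by
      have hm := mul_le_mul_of_nonneg_left hlog ha1'.le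
      have e : (1 - a) * (Real.log u * (2 * a / (1 - a)) + 4 * a * t / (1 - a))
          = 2 * a * Real.log u + 4 * a * t := by field_simp
      linarith [e ▸ hm]
    rw [Ma, div_le_iff₀ ha1']
    have h2a : (0:ℝ) < 2 * a := by linarith
    have := (le_div_iff₀ h2a).mpr (by linarith [key2] :
      (Real.log u + 2 * t) * (2 * a) ≤ (1 - a) * Real.log ((1 - a) / (1 + a)))
    calc Real.log u + 2 * t
        ≤ (1 - a) * Real.log ((1 - a) / (1 + a)) / (2 * a) := this
      _ = 1 / (2 * a) * Real.log ((1 - a) / (1 + a)) * (1 - a) := by ring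
  have hw1M : (Real.log u + 1 * t) / (1 - a) ≤ Ma a :=
    le_trans ((div_le_div_iff_of_pos_right ha1').mpr
      (by linarith : Real.log u + 1 * t ≤ Real.log u + 2 * t)) hw2M
  have hanti := fab_anti ha0 ha1
  constructor
  · have hle : (Real.log u + 1 * t) / (1 - a) ≤ psi1 x := by
      by_contra h
      push_neg at h
      have hlt := hanti (Set.mem_Iic.mpr hpM) (Set.mem_Iic.mpr hw1M) h
      rw [hpf] at hlt
      linarith [hfw1]
    calc Real.log u / (1 - a) + 1 / (1 - a) * t
        = (Real.log u + 1 * t) / (1 - a) := by ring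
      _ ≤ psi1 x := hle
  · have hge : psi1 x ≤ (Real.log u + 2 * t) / (1 - a) := by
      by_contra h
      push_neg at h
      have hlt := hanti (Set.mem_Iic.mpr hw2M) (Set.mem_Iic.mpr hpM) h
      rw [hpf] at hlt
      linarith [hfw2]
    calc psi1 x ≤ (Real.log u + 2 * t) / (1 - a) := hge
      _ = Real.log u / (1 - a) + 2 / (1 - a) * t := by ring
end
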